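/- Assume Conjecture HL(δ). Let k ≥ 1 be a fixed integer and set Λ_0(n;q) := Λ(n) − q/φ(q). There exists a constant C = C(k,δ) > 0 such that for all integers q ≥ 1, N ≥ 1, D ≥ 1 and every set 𝒟 ⊆ [1,D] of k distinct positive multiples of q: |Σ_{1≤n≤N, gcd(n,q)=1} ∏_{d∈𝒟} Λ_0(n+d;q) − 𝔖_0(𝒟;q)·#{1≤n≤N : gcd(n,q)=1}| ≤ C (q/φ(q))^k (N+D)^{1−δ}. -/

import Mathlib

open Finset Filter

/-- Number of residue classes mod `p` occupied by `D`. -/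
def vpD (D : Finset ℕ) (p : ℕ) : ℕ := (D.image (· % p)).card

/-- The singular series `𝔖(𝒟;q)`. -/
noncomputable def singSeries (D : Finset ℕ) (q : ℕ) : ℝ :=
  ((q : ℝ) / q.totient) ^ D.card *
    ∏' p : Nat.Primes, if ((p : ℕ) ∣ q) then 1
      else ((1 - 1 / ((p : ℕ) : ℝ))⁻¹) ^ D.card * (1 - (vpD D p : ℝ) / ((p : ℕ) : ℝ))

/-- The uniform Hardy–Littlewood conjecture with exponent saving `δ`. -/
def HL (δ : ℝ) : Prop :=
  0 < δ ∧ δ < 1 / 2 ∧ ∀ k : ℕ, 1 ≤ k → ∃ C : ℝ, 0 < C ∧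
    ∀ q N D : ℕ, 1 ≤ q → 1 ≤ N → 1 ≤ D →
      ∀ 𝒟 : Finset ℕ, 𝒟.card = k → (∀ d ∈ 𝒟, 0 < d ∧ d ≤ D ∧ q ∣ d) →
      |(∑ n ∈ (Finset.Icc 1 N).filter (fun n => Nat.gcd n q = 1),
          ∏ d ∈ 𝒟, ArithmeticFunction.vonMangoldt (n + d)) -
        singSeries 𝒟 q * ((Finset.Icc 1 N).filter (fun n => Nat.gcd n q = 1)).card| ≤
        C * (((N : ℝ) + D) ^ (1 - δ) : ℝ)

/-- Reduced residues modulo `q`. -/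
def residues (q : ℕ) : Finset ℕ := (Finset.range q).filter (fun a => Nat.gcd a q = 1)

/-- Integers `1 ≤ n ≤ N` with `n ≡ a (mod q)`. -/
def progSet (N q a : ℕ) : Finset ℕ := (Finset.Icc 1 N).filter (fun n => n % q = a % q)

/-- Gaussian moments `μ_k`. -/
noncomputable def gaussMoment (k : ℕ) : ℝ :=
  if Even k then (k.factorial : ℝ) / (2 ^ (k / 2) * (k / 2).factorial) else 0

/-- The constant `B_q`. -/
noncomputable def Bq (q : ℕ) : ℝ :=
  1 - Real.eulerMascheroniConstant - Real.log (2 * Real.pi) -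
    ∑ p ∈ q.primeFactors, Real.log p / ((p : ℝ) - 1)

/-- The normalized singular series `𝔖_0(𝒟;q)`. -/
noncomputable def singSeries0 (D : Finset ℕ) (q : ℕ) : ℝ :=
  ∑ J ∈ D.powerset, (-((q : ℝ) / q.totient)) ^ (D.card - J.card) * singSeries J q


lemma singSeries_empty (q : ℕ) : singSeries ∅ q = 1 := by
  simp [singSeries, vpD]

/-- Correlations of `Λ_0(·;q) = Λ(·) − q/φ(q)` under the uniform Hardy–Littlewood
conjecture (Lemma 3.1). -/
theorem correlations_Lambda0 (δ : ℝ) (hHL : HL δ) (k : ℕ) (hk : 1 ≤ k) :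
    ∃ C : ℝ, 0 < C ∧ ∀ q N D : ℕ, 1 ≤ q → 1 ≤ N → 1 ≤ D →
      ∀ 𝒟 : Finset ℕ, 𝒟.card = k → (∀ d ∈ 𝒟, 0 < d ∧ d ≤ D ∧ q ∣ d) →
      |(∑ n ∈ (Finset.Icc 1 N).filter (fun n => Nat.gcd n q = 1),
          ∏ d ∈ 𝒟, (ArithmeticFunction.vonMangoldt (n + d) - (q : ℝ) / q.totient)) -
        singSeries0 𝒟 q * ((Finset.Icc 1 N).filter (fun n => Nat.gcd n q = 1)).card| ≤
        C * ((q : ℝ) / q.totient) ^ k * (((N : ℝ) + D) ^ (1 - δ) : ℝ) := by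
  obtain ⟨hδ0, hδ2, h⟩ := hHL
  choose C0 hC0pos hC0 using h
  set f : ℕ → ℝ := fun j => if hj : 1 ≤ j then C0 j hj else 1 with hf
  have hfpos : ∀ j, 0 < f j := by
    intro j; simp only [hf]; split
    · exact hC0pos _ _
    · norm_num
  set S : ℝ := ∑ j ∈ Finset.Icc 1 k, f j with hS
  have hSpos : 0 < S :=
    Finset.sum_pos (fun j _ => hfpos j) ⟨1, by simp [hk]⟩
  refine ⟨2 ^ k * S, by positivity, ?_⟩
  intro q N D hq hN hD 𝒟 hcard h𝒟
  set r : ℝ := (q : ℝ) / q.totient with hr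
  have hφ : 0 < q.totient := Nat.totient_pos.mpr hq
  have hr1 : 1 ≤ r := by
    rw [hr, le_div_iff₀ (by exact_mod_cast hφ)]
    simpa using (Nat.cast_le (α := ℝ)).mpr (Nat.totient_le q)
  have hr0 : 0 < r := lt_of_lt_of_le one_pos hr1
  set A := (Finset.Icc 1 N).filter (fun n => Nat.gcd n q = 1) with hA
  have hpow_nonneg : (0:ℝ) ≤ ((N : ℝ) + D) ^ (1 - δ) :=
    Real.rpow_nonneg (by positivity) _
  -- expand the product
  have expand : ∀ n : ℕ, ∏ d ∈ 𝒟, (ArithmeticFunction.vonMangoldt (n + d) - r)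
      = ∑ J ∈ 𝒟.powerset, (-r) ^ (k - J.card) *
          ∏ d ∈ J, ArithmeticFunction.vonMangoldt (n + d) := by
    intro n
    have := Finset.prod_add (fun d => ArithmeticFunction.vonMangoldt (n + d))
      (fun _ => -r) 𝒟
    simp only [sub_eq_add_neg]
    rw [this]
    refine Finset.sum_congr rfl fun J hJ => ?_
    rw [Finset.mem_powerset] at hJ
    rw [Finset.prod_const, Finset.card_sdiff_of_subset hJ, hcard, mul_comm]
  -- rewrite both sides as a sum over subsets
  have hLHS : (∑ n ∈ A, ∏ d ∈ 𝒟, (ArithmeticFunction.vonMangoldt (n + d) - r))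
      - singSeries0 𝒟 q * A.card
      = ∑ J ∈ 𝒟.powerset, (-r) ^ (k - J.card) *
          ((∑ n ∈ A, ∏ d ∈ J, ArithmeticFunction.vonMangoldt (n + d))
            - singSeries J q * A.card) := by
    have h1 : (∑ n ∈ A, ∏ d ∈ 𝒟, (ArithmeticFunction.vonMangoldt (n + d) - r))
        = ∑ J ∈ 𝒟.powerset, (-r) ^ (k - J.card) *
            ∑ n ∈ A, ∏ d ∈ J, ArithmeticFunction.vonMangoldt (n + d) := by
      simp_rw [expand]
      rw [Finset.sum_comm]
      simp_rw [Finset.mul_sum]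
    have h2 : singSeries0 𝒟 q * (A.card : ℝ)
        = ∑ J ∈ 𝒟.powerset, (-r) ^ (k - J.card) * (singSeries J q * A.card) := by
      rw [singSeries0, Finset.sum_mul, hcard]
      refine Finset.sum_congr rfl fun J _ => ?_
      ring
    rw [h1, h2, ← Finset.sum_sub_distrib]
    refine Finset.sum_congr rfl fun J _ => ?_
    ring
  rw [hLHS]
  -- bound each term
  have hterm : ∀ J ∈ 𝒟.powerset, |(-r) ^ (k - J.card) *
      ((∑ n ∈ A, ∏ d ∈ J, ArithmeticFunction.vonMangoldt (n + d))
        - singSeries J q * A.card)|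
      ≤ r ^ k * S * (((N : ℝ) + D) ^ (1 - δ)) := by
    intro J hJ
    rw [Finset.mem_powerset] at hJ
    have hJk : J.card ≤ k := hcard ▸ Finset.card_le_card hJ
    have hpow : |(-r) ^ (k - J.card)| ≤ r ^ k := by
      rw [abs_pow, abs_neg, abs_of_pos hr0]
      exact pow_le_pow_right₀ hr1 (Nat.sub_le _ _)
    have hmain : |(∑ n ∈ A, ∏ d ∈ J, ArithmeticFunction.vonMangoldt (n + d))
        - singSeries J q * A.card| ≤ S * (((N : ℝ) + D) ^ (1 - δ)) := by
      by_cases hJe : J = ∅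
      · subst hJe
        simp only [Finset.prod_empty, Finset.sum_const, nsmul_eq_mul, mul_one,
          singSeries_empty, one_mul, sub_self, abs_zero]
        positivity
      · have h1 : 1 ≤ J.card := Finset.one_le_card.mpr (Finset.nonempty_of_ne_empty hJe)
        have hfS : f J.card ≤ S := by
          refine Finset.single_le_sum (fun j _ => (hfpos j).le) ?_
          simp [Finset.mem_Icc, h1, hJk]
        have := hC0 J.card h1 q N D hq hN hD J rfl
          (fun d hd => h𝒟 d (hJ hd))
        calc _ ≤ C0 J.card h1 * (((N : ℝ) + D) ^ (1 - δ)) := this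
          _ ≤ S * (((N : ℝ) + D) ^ (1 - δ)) := by
              refine mul_le_mul_of_nonneg_right ?_ hpow_nonneg
              simpa only [hf, dif_pos h1] using hfS
    calc |(-r) ^ (k - J.card) * _| = |(-r) ^ (k - J.card)| * _ := abs_mul _ _
      _ ≤ r ^ k * (S * (((N : ℝ) + D) ^ (1 - δ))) := by
          exact mul_le_mul hpow hmain (abs_nonneg _) (by positivity)
      _ = r ^ k * S * (((N : ℝ) + D) ^ (1 - δ)) := by ring
  calc |∑ J ∈ 𝒟.powerset, _| ≤ ∑ J ∈ 𝒟.powerset, _ :=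
        Finset.abs_sum_le_sum_abs _ _
    _ ≤ ∑ J ∈ 𝒟.powerset, r ^ k * S * (((N : ℝ) + D) ^ (1 - δ)) :=
        Finset.sum_le_sum hterm
    _ = 2 ^ k * S * r ^ k * (((N : ℝ) + D) ^ (1 - δ)) := by
        rw [Finset.sum_const, Finset.card_powerset, hcard, nsmul_eq_mul]
        push_cast
        ring
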